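/- On the 3-plectic manifold (ℝ⁶, ω) with ω = dx¹∧dx³∧dx⁵∧dx⁶ + dx²∧dx⁴∧dx⁵∧dx⁶, the 2-forms f₁ = (x₁²x₃ − x₄) dx⁵∧dx⁶ and f₂ = −(x₃ + x₂²x₄) dx⁵∧dx⁶ admit Hamiltonian vector fields x₁ = x₁²∂₁ − ∂₂ − 2x₁x₃∂₃ and x₂ = −∂₁ − x₂²∂₂ + 2x₂x₄∂₄ (i.e., i_{x_i}ω = df_i), and their Lie bracket is [x₂,x₁] = 2x₁∂₁ + 2x₂∂₂ − 2x₃∂₃ − 2x₄∂₄. -/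

import Mathlib

noncomputable section

/-- A `k`-form on `ℝ⁶`, given pointwise as a function of `k` tangent vectors. -/
def Form (k : ℕ) : Type := (Fin 6 → ℝ) → (Fin k → (Fin 6 → ℝ)) → ℝ

/-- The constant-coefficient form `dx^{idx 0} ∧ ⋯ ∧ dx^{idx (k-1)}`, evaluated on `k`
tangent vectors as a determinant. -/
def dxW {k : ℕ} (idx : Fin k → Fin 6) (v : Fin k → (Fin 6 → ℝ)) : ℝ :=
  Matrix.det (Matrix.of fun a b : Fin k => v a (idx b))

/-- Exterior derivative of a `k`-form on `ℝ⁶`. -/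
def extd {k : ℕ} (η : Form k) : Form (k + 1) := fun p v =>
  ∑ i : Fin (k + 1),
    (-1 : ℝ) ^ (i : ℕ) * fderiv ℝ (fun q => η q (fun j => v (i.succAbove j))) p (v i)

/-- Interior product of a vector field with a `(k+1)`-form on `ℝ⁶`. -/
def intP {k : ℕ} (X : (Fin 6 → ℝ) → (Fin 6 → ℝ)) (η : Form (k + 1)) : Form k :=
  fun p v => η p (Fin.cons (X p) v)

/-- The Lie bracket of vector fields on `ℝ⁶`, in the convention
`[X,Y]^i = Y^j ∂_j X^i - X^j ∂_j Y^i` used in the source. -/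
def lieBr (X Y : (Fin 6 → ℝ) → (Fin 6 → ℝ)) : (Fin 6 → ℝ) → (Fin 6 → ℝ) :=
  fun p => fderiv ℝ X p (Y p) - fderiv ℝ Y p (X p)

/-- The 3-plectic form `ω = dx¹∧dx³∧dx⁵∧dx⁶ + dx²∧dx⁴∧dx⁵∧dx⁶` on `ℝ⁶` (0-indexed). -/
def omega6 : Form 4 := fun _ v => dxW ![0, 2, 4, 5] v + dxW ![1, 3, 4, 5] v

/-- `f₁ = (x₁² x₃ - x₄) dx⁵∧dx⁶`. -/
def form1 : Form 2 := fun p v => (p 0 ^ 2 * p 2 - p 3) * dxW ![4, 5] v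

/-- `f₂ = -(x₃ + x₂² x₄) dx⁵∧dx⁶`. -/
def form2 : Form 2 := fun p v => -(p 2 + p 1 ^ 2 * p 3) * dxW ![4, 5] v

/-- `x₁ = x₁² ∂₁ - ∂₂ - 2x₁x₃ ∂₃`. -/
def vf1 : (Fin 6 → ℝ) → (Fin 6 → ℝ) :=
  fun p => ![p 0 ^ 2, -1, -(2 * p 0 * p 2), 0, 0, 0]

/-- `x₂ = -∂₁ - x₂² ∂₂ + 2x₂x₄ ∂₄`. -/
def vf2 : (Fin 6 → ℝ) → (Fin 6 → ℝ) :=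
  fun p => ![-1, -(p 1 ^ 2), 0, 2 * p 1 * p 3, 0, 0]


/-! ### Auxiliary machinery -/

def proj6 (i : Fin 6) : (Fin 6 → ℝ) →L[ℝ] ℝ := ContinuousLinearMap.proj i

lemma hproj (i : Fin 6) (p : Fin 6 → ℝ) :
    HasFDerivAt (fun q : Fin 6 → ℝ => q i) (proj6 i) p := by
  exact (proj6 i).hasFDerivAt

lemma hf1 (p : Fin 6 → ℝ) (c : ℝ) (w : Fin 6 → ℝ) :
    fderiv ℝ (fun q : Fin 6 → ℝ => (q 0 ^ 2 * q 2 - q 3) * c) p w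
      = (2 * p 0 * w 0 * p 2 + p 0 ^ 2 * w 2 - w 3) * c := by
  have e : (fun q : Fin 6 → ℝ => (q 0 ^ 2 * q 2 - q 3) * c)
      = fun q : Fin 6 → ℝ => (q 0 * q 0 * q 2 - q 3) * c := by funext q; ring
  rw [e]
  have h : HasFDerivAt (fun q : Fin 6 → ℝ => (q 0 * q 0 * q 2 - q 3) * c) _ p := ((((hproj 0 p).mul (hproj 0 p)).mul (hproj 2 p)).sub (hproj 3 p)).mul_const c
  rw [h.fderiv]; simp [proj6]; ring

lemma hf2 (p : Fin 6 → ℝ) (c : ℝ) (w : Fin 6 → ℝ) :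
    fderiv ℝ (fun q : Fin 6 → ℝ => -(q 2 + q 1 ^ 2 * q 3) * c) p w
      = -(w 2 + 2 * p 1 * w 1 * p 3 + p 1 ^ 2 * w 3) * c := by
  have e : (fun q : Fin 6 → ℝ => -(q 2 + q 1 ^ 2 * q 3) * c)
      = fun q : Fin 6 → ℝ => -((q 2 + q 1 * q 1 * q 3) * c) := by funext q; ring
  rw [e]
  have h : HasFDerivAt (fun q : Fin 6 → ℝ => -((q 2 + q 1 * q 1 * q 3) * c)) _ p := (((hproj 2 p).add (((hproj 1 p).mul (hproj 1 p)).mul (hproj 3 p))).mul_const c).neg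
  rw [h.fderiv]; simp [proj6]; ring

lemma det4 (A : Matrix (Fin 4) (Fin 4) ℝ) : A.det =
    A 0 0 * (A 1 1 * (A 2 2 * A 3 3 - A 2 3 * A 3 2) - A 1 2 * (A 2 1 * A 3 3 - A 2 3 * A 3 1)
      + A 1 3 * (A 2 1 * A 3 2 - A 2 2 * A 3 1))
    - A 0 1 * (A 1 0 * (A 2 2 * A 3 3 - A 2 3 * A 3 2) - A 1 2 * (A 2 0 * A 3 3 - A 2 3 * A 3 0)
      + A 1 3 * (A 2 0 * A 3 2 - A 2 2 * A 3 0))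
    + A 0 2 * (A 1 0 * (A 2 1 * A 3 3 - A 2 3 * A 3 1) - A 1 1 * (A 2 0 * A 3 3 - A 2 3 * A 3 0)
      + A 1 3 * (A 2 0 * A 3 1 - A 2 1 * A 3 0))
    - A 0 3 * (A 1 0 * (A 2 1 * A 3 2 - A 2 2 * A 3 1) - A 1 1 * (A 2 0 * A 3 2 - A 2 2 * A 3 0)
      + A 1 2 * (A 2 0 * A 3 1 - A 2 1 * A 3 0)) := by
  rw [Matrix.det_succ_row_zero]
  simp [Fin.sum_univ_succ, Matrix.det_fin_three, Matrix.submatrix_apply,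
    show (Fin.succAbove 1 2 : Fin 4) = 3 from rfl, show (Fin.succAbove 2 2 : Fin 4) = 3 from rfl,
    show (Fin.succAbove 3 2 : Fin 4) = 2 from rfl]
  ring

lemma dx2 (idx : Fin 2 → Fin 6) (u : Fin 2 → Fin 6 → ℝ) :
    dxW idx u = u 0 (idx 0) * u 1 (idx 1) - u 0 (idx 1) * u 1 (idx 0) := by
  simp [dxW, Matrix.det_fin_two]

lemma dx4 (idx : Fin 4 → Fin 6) (u : Fin 4 → Fin 6 → ℝ) :
    dxW idx u =
    u 0 (idx 0) * (u 1 (idx 1) * (u 2 (idx 2) * u 3 (idx 3) - u 2 (idx 3) * u 3 (idx 2)) - u 1 (idx 2) * (u 2 (idx 1) * u 3 (idx 3) - u 2 (idx 3) * u 3 (idx 1))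
      + u 1 (idx 3) * (u 2 (idx 1) * u 3 (idx 2) - u 2 (idx 2) * u 3 (idx 1)))
    - u 0 (idx 1) * (u 1 (idx 0) * (u 2 (idx 2) * u 3 (idx 3) - u 2 (idx 3) * u 3 (idx 2)) - u 1 (idx 2) * (u 2 (idx 0) * u 3 (idx 3) - u 2 (idx 3) * u 3 (idx 0))
      + u 1 (idx 3) * (u 2 (idx 0) * u 3 (idx 2) - u 2 (idx 2) * u 3 (idx 0)))
    + u 0 (idx 2) * (u 1 (idx 0) * (u 2 (idx 1) * u 3 (idx 3) - u 2 (idx 3) * u 3 (idx 1)) - u 1 (idx 1) * (u 2 (idx 0) * u 3 (idx 3) - u 2 (idx 3) * u 3 (idx 0))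
      + u 1 (idx 3) * (u 2 (idx 0) * u 3 (idx 1) - u 2 (idx 1) * u 3 (idx 0)))
    - u 0 (idx 3) * (u 1 (idx 0) * (u 2 (idx 1) * u 3 (idx 2) - u 2 (idx 2) * u 3 (idx 1)) - u 1 (idx 1) * (u 2 (idx 0) * u 3 (idx 2) - u 2 (idx 2) * u 3 (idx 0))
      + u 1 (idx 2) * (u 2 (idx 0) * u 3 (idx 1) - u 2 (idx 1) * u 3 (idx 0))) := by
  rw [dxW, det4]; simp

lemma cons0 (x : Fin 6 → ℝ) (u : Fin 3 → Fin 6 → ℝ) : (Fin.cons x u : Fin 4 → Fin 6 → ℝ) 0 = x := rfl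
lemma cons1 (x : Fin 6 → ℝ) (u : Fin 3 → Fin 6 → ℝ) : (Fin.cons x u : Fin 4 → Fin 6 → ℝ) 1 = u 0 := rfl
lemma cons2 (x : Fin 6 → ℝ) (u : Fin 3 → Fin 6 → ℝ) : (Fin.cons x u : Fin 4 → Fin 6 → ℝ) 2 = u 1 := rfl
lemma cons3 (x : Fin 6 → ℝ) (u : Fin 3 → Fin 6 → ℝ) : (Fin.cons x u : Fin 4 → Fin 6 → ℝ) 3 = u 2 := rfl

lemma vf1_0 (p : Fin 6 → ℝ) : vf1 p 0 = p 0 ^ 2 := rfl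
lemma vf1_1 (p : Fin 6 → ℝ) : vf1 p 1 = -1 := rfl
lemma vf1_2 (p : Fin 6 → ℝ) : vf1 p 2 = -(2 * p 0 * p 2) := rfl
lemma vf1_3 (p : Fin 6 → ℝ) : vf1 p 3 = 0 := rfl
lemma vf1_4 (p : Fin 6 → ℝ) : vf1 p 4 = 0 := rfl
lemma vf1_5 (p : Fin 6 → ℝ) : vf1 p 5 = 0 := rfl

lemma vf2_0 (p : Fin 6 → ℝ) : vf2 p 0 = -1 := rfl
lemma vf2_1 (p : Fin 6 → ℝ) : vf2 p 1 = -(p 1 ^ 2) := rfl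
lemma vf2_2 (p : Fin 6 → ℝ) : vf2 p 2 = 0 := rfl
lemma vf2_3 (p : Fin 6 → ℝ) : vf2 p 3 = 2 * p 1 * p 3 := rfl
lemma vf2_4 (p : Fin 6 → ℝ) : vf2 p 4 = 0 := rfl
lemma vf2_5 (p : Fin 6 → ℝ) : vf2 p 5 = 0 := rfl

lemma ham1 : intP (k := 3) vf1 omega6 = extd form1 := by
  funext p v
  simp only [intP, extd, omega6, form1, hf1, dx2, dx4, Fin.sum_univ_succ, Finset.sum_empty,
    Finset.univ_eq_empty]
  norm_num [Fin.succAbove, Fin.lt_def, cons0, cons1, cons2, cons3,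
    vf1_0, vf1_1, vf1_2, vf1_3, vf1_4, vf1_5, Matrix.cons_val_two, Matrix.cons_val_three]
  ring

lemma ham2 : intP (k := 3) vf2 omega6 = extd form2 := by
  funext p v
  simp only [intP, extd, omega6, form2, hf2, dx2, dx4, Fin.sum_univ_succ, Finset.sum_empty,
    Finset.univ_eq_empty]
  norm_num [Fin.succAbove, Fin.lt_def, cons0, cons1, cons2, cons3,
    vf2_0, vf2_1, vf2_2, vf2_3, vf2_4, vf2_5, Matrix.cons_val_two, Matrix.cons_val_three]
  ring

def D1 (p : Fin 6 → ℝ) : (Fin 6 → ℝ) →L[ℝ] (Fin 6 → ℝ) :=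
  ContinuousLinearMap.pi
    ![p 0 • proj6 0 + p 0 • proj6 0, 0, -((2:ℝ) • (p 0 • proj6 2 + p 2 • proj6 0)), 0, 0, 0]

def D2 (p : Fin 6 → ℝ) : (Fin 6 → ℝ) →L[ℝ] (Fin 6 → ℝ) :=
  ContinuousLinearMap.pi
    ![0, -(p 1 • proj6 1 + p 1 • proj6 1), 0, (2:ℝ) • (p 1 • proj6 3 + p 3 • proj6 1), 0, 0]

lemma comp10 (p : Fin 6 → ℝ) :
    HasFDerivAt (fun x : Fin 6 → ℝ => x 0 ^ 2) (p 0 • proj6 0 + p 0 • proj6 0) p := by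
  have e : (fun x : Fin 6 → ℝ => x 0 ^ 2) = fun x => x 0 * x 0 := by funext q; ring
  rw [e]; exact (hproj 0 p).mul (hproj 0 p)

lemma comp12 (p : Fin 6 → ℝ) :
    HasFDerivAt (fun x : Fin 6 → ℝ => -(2 * x 0 * x 2))
      (-((2:ℝ) • (p 0 • proj6 2 + p 2 • proj6 0))) p := by
  have e : (fun x : Fin 6 → ℝ => -(2 * x 0 * x 2)) = fun x => -(2 * (x 0 * x 2)) := by
    funext q; ring
  rw [e]; exact (((hproj 0 p).mul (hproj 2 p)).const_mul 2).neg

lemma comp21 (p : Fin 6 → ℝ) :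
    HasFDerivAt (fun x : Fin 6 → ℝ => -(x 1 ^ 2)) (-(p 1 • proj6 1 + p 1 • proj6 1)) p := by
  have e : (fun x : Fin 6 → ℝ => -(x 1 ^ 2)) = fun x => -(x 1 * x 1) := by funext q; ring
  rw [e]; exact ((hproj 1 p).mul (hproj 1 p)).neg

lemma comp23 (p : Fin 6 → ℝ) :
    HasFDerivAt (fun x : Fin 6 → ℝ => 2 * x 1 * x 3)
      ((2:ℝ) • (p 1 • proj6 3 + p 3 • proj6 1)) p := by
  have e : (fun x : Fin 6 → ℝ => 2 * x 1 * x 3) = fun x => 2 * (x 1 * x 3) := by funext q; ring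
  rw [e]; exact ((hproj 1 p).mul (hproj 3 p)).const_mul 2

lemma hvf1 (p : Fin 6 → ℝ) : HasFDerivAt vf1 (D1 p) p := by
  rw [hasFDerivAt_pi']
  intro i
  fin_cases i
  · exact comp10 p
  · exact hasFDerivAt_const _ _
  · exact comp12 p
  · exact hasFDerivAt_const _ _
  · exact hasFDerivAt_const _ _
  · exact hasFDerivAt_const _ _

lemma hvf2 (p : Fin 6 → ℝ) : HasFDerivAt vf2 (D2 p) p := by
  rw [hasFDerivAt_pi']
  intro i
  fin_cases i
  · exact hasFDerivAt_const _ _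
  · exact comp21 p
  · exact hasFDerivAt_const _ _
  · exact comp23 p
  · exact hasFDerivAt_const _ _
  · exact hasFDerivAt_const _ _

lemma bracket : lieBr vf2 vf1 = fun p => ![2 * p 0, 2 * p 1, -(2 * p 2), -(2 * p 3), 0, 0] := by
  funext p
  rw [lieBr, (hvf1 p).fderiv, (hvf2 p).fderiv]
  funext i
  fin_cases i
  · show (0 : (Fin 6 → ℝ) →L[ℝ] ℝ) (vf1 p) - (p 0 • proj6 0 + p 0 • proj6 0) (vf2 p) = 2 * p 0
    simp [proj6, vf1, vf2]; ring
  · show (-(p 1 • proj6 1 + p 1 • proj6 1)) (vf1 p) - (0 : (Fin 6 → ℝ) →L[ℝ] ℝ) (vf2 p) = 2 * p 1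
    simp [proj6, vf1, vf2]; ring
  · show (0 : (Fin 6 → ℝ) →L[ℝ] ℝ) (vf1 p) - (-((2:ℝ) • (p 0 • proj6 2 + p 2 • proj6 0))) (vf2 p)
        = -(2 * p 2)
    simp [proj6, vf1, vf2]
  · show ((2:ℝ) • (p 1 • proj6 3 + p 3 • proj6 1)) (vf1 p) - (0 : (Fin 6 → ℝ) →L[ℝ] ℝ) (vf2 p)
        = -(2 * p 3)
    simp [proj6, vf1, vf2]
  · show (0 : (Fin 6 → ℝ) →L[ℝ] ℝ) (vf1 p) - (0 : (Fin 6 → ℝ) →L[ℝ] ℝ) (vf2 p) = 0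
    simp
  · show (0 : (Fin 6 → ℝ) →L[ℝ] ℝ) (vf1 p) - (0 : (Fin 6 → ℝ) →L[ℝ] ℝ) (vf2 p) = 0
    simp

/-- On the 3-plectic manifold `(ℝ⁶, ω)` the 2-forms `f₁, f₂` admit the
Hamiltonian vector fields `x₁, x₂` (`i_{x_i} ω = d f_i`), and their Lie bracket is
`[x₂,x₁] = 2x₁∂₁ + 2x₂∂₂ - 2x₃∂₃ - 2x₄∂₄`. -/
theorem r6_threeplectic_example :
    intP (k := 3) vf1 omega6 = extd form1 ∧
    intP (k := 3) vf2 omega6 = extd form2 ∧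
    lieBr vf2 vf1 = fun p => ![2 * p 0, 2 * p 1, -(2 * p 2), -(2 * p 3), 0, 0] := by
  exact ⟨ham1, ham2, bracket⟩

end
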